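/- Let G = (V,E) be a finite isolate-free simple graph (every vertex has at least one neighbor), let M ⊆ V be a set which is not dominating (N[M] ≠ V), and let p be a value function for M. Then Σ_{v∈V} p(v) ≥ 5. In particular, the last move of the domination game on a component gains at least 5 points (since after the last move all values are 0). -/

import Mathlib

/-- The closed neighborhood of a set `S` of vertices: `S` together with all vertices
adjacent to some member of `S`. -/
def closedNbhdSet {V : Type*} (G : SimpleGraph V) (S : Set V) : Set V :=
  S ∪ {u | ∃ s ∈ S, G.Adj u s}

/-- `p` is a value function for the position `M`: every white vertex (not dominated)
is worth `3` points, every red vertex (its whole closed neighborhood is dominated)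
is worth `0` points, and every blue vertex (dominated but with an undominated
neighbor) is worth `2` or `3` points. -/
def IsValueFn {V : Type*} (G : SimpleGraph V) (M : Set V) (p : V → ℕ) : Prop :=
  (∀ u, u ∉ closedNbhdSet G M → p u = 3) ∧
  (∀ u, closedNbhdSet G {u} ⊆ closedNbhdSet G M → p u = 0) ∧
  (∀ u, u ∈ closedNbhdSet G M → ¬ closedNbhdSet G {u} ⊆ closedNbhdSet G M →
    (p u = 2 ∨ p u = 3))

/-- In an isolate-free graph, if `M` is not a dominating set then the total value of
the vertices is at least 5; in particular the last move of the game on a component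
gains at least 5 points. -/
theorem last_move_gains_five {V : Type*} [Fintype V] (G : SimpleGraph V)
    (hiso : ∀ v : V, ∃ w : V, G.Adj v w)
    (M : Set V) (hM : closedNbhdSet G M ≠ Set.univ)
    (p : V → ℕ) (hp : IsValueFn G M p) :
    5 ≤ ∑ u, p u := by
  classical
  obtain ⟨hwhite, hred, hblue⟩ := hp
  -- get a white vertex w
  have : ∃ w : V, w ∉ closedNbhdSet G M := by
    by_contra h
    push_neg at h
    exact hM (Set.eq_univ_of_forall h)
  obtain ⟨w, hw⟩ := this
  obtain ⟨u, hadj⟩ := hiso w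
  have hwu : w ≠ u := fun h => G.loopless.irrefl u (h ▸ hadj)
  have hpw : p w = 3 := hwhite w hw
  -- w ∈ N[u]
  have hwNu : w ∈ closedNbhdSet G {u} := Or.inr ⟨u, rfl, hadj⟩
  have hnot : ¬ closedNbhdSet G {u} ⊆ closedNbhdSet G M := fun h => hw (h hwNu)
  have hpu : 2 ≤ p u := by
    by_cases hu : u ∈ closedNbhdSet G M
    · rcases hblue u hu hnot with h | h <;> omega
    · have := hwhite u hu; omega
  calc 5 ≤ p w + p u := by omega
    _ = ∑ v ∈ ({w, u} : Finset V), p v := (Finset.sum_pair hwu).symm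
    _ ≤ ∑ v, p v := Finset.sum_le_sum_of_subset (Finset.subset_univ _)
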